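/- Let $X = (X_1,\dots,X_n)$ be a vector of independent random variables taking values in a set $\mathcal{X}$, let $X'$ be an independent copy of $X$, and let $f:\mathcal{X}^n\to\mathbb{R}$ be measurable with $f(X)$ square-integrable. For $A\subseteq[n]$ let $X^A$ denote the vector obtained from $X$ by replacing the coordinates indexed by $A$ with the corresponding coordinates of $X'$, and write $X^{(i)}=X^{\{i\}}$ and $X^{[i]}=X^{\{1,\dots,i\}}$. Then $\mathrm{Var}(f(X)) = \tfrac{1}{2}\sum_{i=1}^n \mathbb{E}\big[(f(X)-f(X^{(i)}))(f(X^{[i-1]})-f(X^{[i]}))\big]$. -/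

import Mathlib

open MeasureTheory ProbabilityTheory

lemma aux_map_joint_eq_pi {Ω 𝒳 ι : Type*} [Fintype ι] [MeasurableSpace Ω] [MeasurableSpace 𝒳]
    {μ : Measure Ω} [IsProbabilityMeasure μ] {Y : ι → Ω → 𝒳} (hY : ∀ k, Measurable (Y k))
    (hind : iIndepFun Y μ) :
    Measure.map (fun ω k => Y k ω) μ = Measure.pi (fun k => Measure.map (Y k) μ) := by
  haveI : ∀ k, IsProbabilityMeasure (Measure.map (Y k) μ) :=
    fun k => Measure.isProbabilityMeasure_map (hY k).aemeasurable
  refine (Measure.pi_eq (μ := fun k => Measure.map (Y k) μ) fun s hs => ?_).symm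
  rw [Measure.map_apply (measurable_pi_lambda _ fun k => hY k) (MeasurableSet.univ_pi hs)]
  have h1 : (fun ω k => Y k ω) ⁻¹' (Set.univ.pi s) = ⋂ k, Y k ⁻¹' s k := by
    ext ω; simp [Set.mem_pi]
  rw [h1, hind.meas_iInter fun k => ⟨s k, hs k, rfl⟩]
  exact Finset.prod_congr rfl fun k _ => (Measure.map_apply (hY k) (hs k)).symm

lemma aux_map_comp_equiv {ι 𝒳 : Type*} [Fintype ι] [MeasurableSpace 𝒳]
    (ν : ι → Measure 𝒳) [∀ k, IsProbabilityMeasure (ν k)] (e : ι ≃ ι)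
    (hν : ∀ k, ν (e k) = ν k) :
    Measure.map (fun x : ι → 𝒳 => x ∘ e) (Measure.pi ν) = Measure.pi ν := by
  refine (Measure.pi_eq (μ := ν) fun s hs => ?_).symm
  have hm : Measurable (fun x : ι → 𝒳 => x ∘ e) :=
    measurable_pi_lambda _ fun j => measurable_pi_apply _
  rw [Measure.map_apply hm (MeasurableSet.univ_pi hs)]
  have h1 : (fun x : ι → 𝒳 => x ∘ e) ⁻¹' (Set.univ.pi s) = Set.univ.pi (fun k => s (e.symm k)) := by
    ext x
    simp only [Set.mem_preimage, Set.mem_pi, Set.mem_univ, forall_true_left, Function.comp]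
    exact ⟨fun h k => by simpa using h (e.symm k), fun h j => by simpa using h (e j)⟩
  rw [h1, Measure.pi_pi]
  have := Equiv.prod_comp e (fun k => ν k (s (e.symm k)))
  rw [← this]
  simp [hν]

lemma aux_integrable_mul {α : Type*} [MeasurableSpace α] {μ : Measure α} {f g : α → ℝ}
    (hf : MemLp f 2 μ) (hg : MemLp g 2 μ) : Integrable (fun x => f x * g x) μ := by
  have h := hg.smul (φ := f) (q := 2) (p := 2) (r := 1) hf
  rw [memLp_one_iff_integrable] at h
  exact h

/-- The permutation of `Fin n ⊕ Fin n` swapping `inl j` and `inr j` for `j ∈ A`. -/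
def auxSwap {n : ℕ} (A : Finset (Fin n)) : (Fin n ⊕ Fin n) ≃ (Fin n ⊕ Fin n) where
  toFun := Sum.elim (fun j => if j ∈ A then Sum.inr j else Sum.inl j)
           (fun j => if j ∈ A then Sum.inl j else Sum.inr j)
  invFun := Sum.elim (fun j => if j ∈ A then Sum.inr j else Sum.inl j)
           (fun j => if j ∈ A then Sum.inl j else Sum.inr j)
  left_inv := by rintro (j|j) <;> by_cases h : j ∈ A <;> simp [h]
  right_inv := by rintro (j|j) <;> by_cases h : j ∈ A <;> simp [h]

/-- Chatterjee's variance formula via resampling. -/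
theorem stmt_0 {Ω 𝒳 : Type*} [MeasurableSpace Ω] [MeasurableSpace 𝒳]
    (μ : Measure Ω) [IsProbabilityMeasure μ] (n : ℕ)
    (X X' : Fin n → Ω → 𝒳)
    (hmeas : ∀ i, Measurable (X i)) (hmeas' : ∀ i, Measurable (X' i))
    (hindep : iIndepFun (Sum.elim X X') μ)
    (hid : ∀ i, IdentDistrib (X i) (X' i) μ μ)
    (f : (Fin n → 𝒳) → ℝ) (hf : Measurable f)
    (hL2 : MemLp (fun ω => f (fun i => X i ω)) 2 μ) :
    variance (fun ω => f (fun i => X i ω)) μ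
      = (1 / 2) * ∑ i : Fin n, ∫ ω,
          (f (fun j => X j ω) - f (fun j => if j = i then X' j ω else X j ω)) *
          (f (fun j => if j < i then X' j ω else X j ω) -
           f (fun j => if j ≤ i then X' j ω else X j ω)) ∂μ := by
  classical
  set Y : Fin n ⊕ Fin n → Ω → 𝒳 := Sum.elim X X' with hYdef
  have hY : ∀ k, Measurable (Y k) := by rintro (i|i); exacts [hmeas i, hmeas' i]
  set ν : Fin n ⊕ Fin n → Measure 𝒳 := fun k => Measure.map (Y k) μ with hνdef
  haveI hνP : ∀ k, IsProbabilityMeasure (ν k) :=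
    fun k => Measure.isProbabilityMeasure_map (hY k).aemeasurable
  set π : Measure ((Fin n ⊕ Fin n) → 𝒳) := Measure.pi ν with hπdef
  set J : Ω → (Fin n ⊕ Fin n) → 𝒳 := fun ω k => Y k ω with hJdef
  have hJ : Measurable J := measurable_pi_lambda _ hY
  have hπ : Measure.map J μ = π := aux_map_joint_eq_pi hY hindep
  haveI : IsProbabilityMeasure π := by
    rw [← hπ]; exact Measure.isProbabilityMeasure_map hJ.aemeasurable
  -- the selection functions
  set F : Finset (Fin n) → ((Fin n ⊕ Fin n) → 𝒳) → ℝ :=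
    fun A x => f (fun j => if j ∈ A then x (Sum.inr j) else x (Sum.inl j)) with hFdef
  have hFmeas : ∀ A, Measurable (F A) := by
    intro A
    apply hf.comp
    apply measurable_pi_lambda
    intro j
    by_cases h : j ∈ A <;> simp only [h, if_true, if_false] <;> exact measurable_pi_apply _
  -- invariance of ν under the swaps
  have hνswap : ∀ (A : Finset (Fin n)) (k : Fin n ⊕ Fin n), ν (auxSwap A k) = ν k := by
    intro A k
    have hXX' : ∀ j, ν (Sum.inr j) = ν (Sum.inl j) := fun j =>
      show Measure.map (X' j) μ = Measure.map (X j) μ from ((hid j).map_eq).symm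
    rcases k with j | j <;> by_cases h : j ∈ A <;>
      simp [auxSwap, h, hXX']
  have hmapswap : ∀ (A : Finset (Fin n)),
      Measure.map (fun x : (Fin n ⊕ Fin n) → 𝒳 => x ∘ auxSwap A) π = π :=
    fun A => aux_map_comp_equiv ν (auxSwap A) (hνswap A)
  have hswapmeas : ∀ (A : Finset (Fin n)),
      Measurable (fun x : (Fin n ⊕ Fin n) → 𝒳 => x ∘ auxSwap A) :=
    fun A => measurable_pi_lambda _ fun j => measurable_pi_apply _
  -- change of variables under the swaps
  have hswapint : ∀ (A : Finset (Fin n)) (H : ((Fin n ⊕ Fin n) → 𝒳) → ℝ), Measurable H →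
      ∫ x, H x ∂π = ∫ x, H (x ∘ auxSwap A) ∂π := by
    intro A H hH
    conv_lhs => rw [← hmapswap A]
    rw [integral_map (hswapmeas A).aemeasurable hH.aestronglyMeasurable]
  -- transfer of integrals from μ to π
  have htrans : ∀ (g : ((Fin n ⊕ Fin n) → 𝒳) → ℝ), Measurable g →
      ∫ x, g x ∂π = ∫ ω, g (J ω) ∂μ := by
    intro g hg
    rw [← hπ, integral_map hJ.aemeasurable hg.aestronglyMeasurable]
  -- composition formula
  have hcomp : ∀ (A : Finset (Fin n)) (x : (Fin n ⊕ Fin n) → 𝒳),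
      F ∅ (x ∘ auxSwap A) = F A x := by
    intro A x
    simp only [hFdef]
    congr 1
    funext j
    by_cases h : j ∈ A <;> simp [auxSwap, h]
  -- square integrability
  have hF0 : MemLp (F ∅) 2 π := by
    rw [← hπ, memLp_map_measure_iff (hFmeas ∅).aestronglyMeasurable hJ.aemeasurable]
    have : (F ∅) ∘ J = fun ω => f fun i => X i ω := by
      funext ω; simp [hFdef, hJdef, hYdef]
    rw [this]; exact hL2
  have hF2 : ∀ A, MemLp (F A) 2 π := by
    intro A
    have h1 : F A = (F ∅) ∘ (fun x => x ∘ auxSwap A) := funext fun x => (hcomp A x).symm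
    rw [h1, ← memLp_map_measure_iff _ (hswapmeas A).aemeasurable, hmapswap A]
    · exact hF0
    · rw [hmapswap A]; exact (hFmeas ∅).aestronglyMeasurable
  -- the key swap identity
  have hFswap : ∀ (A A' : Finset (Fin n)) (i : Fin n),
      (∀ j, j ≠ i → (j ∈ A ↔ j ∈ A')) → ((i ∈ A) ↔ (i ∉ A')) →
      ∀ x, F A (x ∘ auxSwap {i}) = F A' x := by
    intro A A' i hne hi x
    simp only [hFdef]
    congr 1
    funext j
    rcases eq_or_ne j i with rfl | hj
    · by_cases h : j ∈ A
      · have h' : j ∉ A' := hi.mp h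
        simp [auxSwap, h, h']
      · have h' : j ∈ A' := not_not.mp (fun hh => h (hi.mpr hh))
        simp [auxSwap, h, h']
    · have h2 : j ∈ ({i} : Finset (Fin n)) ↔ False := by simp [hj]
      by_cases h : j ∈ A
      · have h' : j ∈ A' := (hne j hj).mp h
        simp [auxSwap, h, h', h2.mp]
        simp [Finset.mem_singleton, hj, h, h']
      · have h' : j ∉ A' := fun hh => h ((hne j hj).mpr hh)
        simp [auxSwap, Finset.mem_singleton, hj, h, h']
  -- integrability of products
  have hInt : ∀ (A B C : Finset (Fin n)),
      Integrable (fun x => F A x * (F B x - F C x)) π := by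
    intro A B C
    exact aux_integrable_mul (hF2 A) ((hF2 B).sub (hF2 C))
  -- Step A : symmetrization
  have hA : ∀ i : Fin n,
      ∫ x, (F ∅ x - F {i} x) * (F (Finset.Iio i) x - F (Finset.Iic i) x) ∂π
        = 2 * ∫ x, F ∅ x * (F (Finset.Iio i) x - F (Finset.Iic i) x) ∂π := by
    intro i
    have hswap1 : ∫ x, F {i} x * (F (Finset.Iio i) x - F (Finset.Iic i) x) ∂π
        = - ∫ x, F ∅ x * (F (Finset.Iio i) x - F (Finset.Iic i) x) ∂π := by
      rw [hswapint {i} _ (by exact (hFmeas {i}).mul ((hFmeas (Finset.Iio i)).sub (hFmeas (Finset.Iic i))) :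
        Measurable fun x => F {i} x * (F (Finset.Iio i) x - F (Finset.Iic i) x))]
      have hptw : ∀ x, F {i} (x ∘ auxSwap {i}) *
            (F (Finset.Iio i) (x ∘ auxSwap {i}) - F (Finset.Iic i) (x ∘ auxSwap {i}))
          = -(F ∅ x * (F (Finset.Iio i) x - F (Finset.Iic i) x)) := by
        intro x
        rw [hFswap {i} ∅ i (fun j hj => by simp [Finset.mem_singleton, hj])
            (by simp) x,
          hFswap (Finset.Iio i) (Finset.Iic i) i
            (fun j hj => by
              simp only [Finset.mem_Iio, Finset.mem_Iic]
              exact ⟨le_of_lt, fun h => lt_of_le_of_ne h hj⟩)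
            (by simp) x,
          hFswap (Finset.Iic i) (Finset.Iio i) i
            (fun j hj => by
              simp only [Finset.mem_Iio, Finset.mem_Iic]
              exact ⟨fun h => lt_of_le_of_ne h hj, le_of_lt⟩)
            (by simp) x]
        ring
      simp_rw [hptw]
      exact integral_neg _
    have h1 : ∀ x, (F ∅ x - F {i} x) * (F (Finset.Iio i) x - F (Finset.Iic i) x)
        = F ∅ x * (F (Finset.Iio i) x - F (Finset.Iic i) x)
          - F {i} x * (F (Finset.Iio i) x - F (Finset.Iic i) x) := fun x => by ring
    simp_rw [h1]
    rw [integral_sub (hInt ∅ _ _) (hInt {i} _ _), hswap1]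
    ring
  -- Step B : telescoping
  have hB : ∑ i : Fin n, ∫ x, F ∅ x * (F (Finset.Iio i) x - F (Finset.Iic i) x) ∂π
      = ∫ x, F ∅ x * (F ∅ x - F Finset.univ x) ∂π := by
    rw [← integral_finset_sum _ (fun i _ => hInt ∅ _ _)]
    congr 1
    funext x
    rw [← Finset.mul_sum]
    congr 1
    set c : ℕ → ℝ := fun k =>
      f (fun j => if (j : ℕ) < k then x (Sum.inr j) else x (Sum.inl j)) with hcdef
    have hio : ∀ i : Fin n, F (Finset.Iio i) x = c i := by
      intro i
      simp only [hFdef, hcdef]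
      congr 1
      funext j
      by_cases h : j < i
      · simp [Finset.mem_Iio, h, Fin.lt_def.mp h]
      · simp [Finset.mem_Iio, h, fun hh => h (Fin.lt_def.mpr hh)]
    have hic : ∀ i : Fin n, F (Finset.Iic i) x = c ((i : ℕ) + 1) := by
      intro i
      simp only [hFdef, hcdef]
      congr 1
      funext j
      by_cases h : j ≤ i
      · simp [Finset.mem_Iic, h, Nat.lt_succ_iff.mpr (Fin.le_def.mp h)]
      · have h2 : ¬ ((j : ℕ) < (i : ℕ) + 1) := fun hh => h (Fin.le_def.mpr (Nat.lt_succ_iff.mp hh))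
        simp [Finset.mem_Iic, h, h2]
    have hc0 : c 0 = F ∅ x := by
      simp [hFdef, hcdef]
    have hcn : c n = F Finset.univ x := by
      simp only [hFdef, hcdef]
      congr 1
      funext j
      simp [j.isLt]
    calc ∑ i : Fin n, (F (Finset.Iio i) x - F (Finset.Iic i) x)
        = ∑ i : Fin n, (c (i : ℕ) - c ((i : ℕ) + 1)) := by
          exact Finset.sum_congr rfl fun i _ => by rw [hio i, hic i]
      _ = ∑ k ∈ Finset.range n, (c k - c (k + 1)) :=
          Fin.sum_univ_eq_sum_range (fun k => c k - c (k + 1)) n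
      _ = c 0 - c n := Finset.sum_range_sub' c n
      _ = F ∅ x - F Finset.univ x := by rw [hc0, hcn]
  -- Step C : decorrelation of F ∅ and F univ
  have hC : ∫ x, F ∅ x * F Finset.univ x ∂π = (∫ x, F ∅ x ∂π) ^ 2 := by
    set πL : Measure (Fin n → 𝒳) := Measure.pi (fun j => ν (Sum.inl j)) with hπLdef
    haveI : IsProbabilityMeasure πL := by
      apply MeasureTheory.Measure.pi.instIsProbabilityMeasure
    have hRL : Measure.pi (fun j => ν (Sum.inr j)) = πL := by
      rw [hπLdef]
      congr 1
      funext j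
      exact show Measure.map (X' j) μ = Measure.map (X j) μ from ((hid j).map_eq).symm
    set E := MeasurableEquiv.sumPiEquivProdPi (fun _ : Fin n ⊕ Fin n => 𝒳) with hEdef
    have hE : MeasurePreserving E π (πL.prod πL) := by
      have := measurePreserving_sumPiEquivProdPi (X := fun _ : Fin n ⊕ Fin n => 𝒳) ν
      rwa [hRL] at this
    have hEint : ∀ (g : ((Fin n → 𝒳) × (Fin n → 𝒳)) → ℝ), Measurable g →
        ∫ x, g (E x) ∂π = ∫ p, g p ∂(πL.prod πL) := by
      intro g hg
      have h := integral_map (μ := π) hE.measurable.aemeasurable hg.aestronglyMeasurable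
      rw [hE.map_eq] at h
      exact h.symm
    have hFE : ∀ x, F ∅ x = f ((E x).1) := by
      intro x
      simp [hFdef, hEdef, MeasurableEquiv.sumPiEquivProdPi, Equiv.sumPiEquivProdPi]
    have hFE' : ∀ x, F Finset.univ x = f ((E x).2) := by
      intro x
      simp [hFdef, hEdef, MeasurableEquiv.sumPiEquivProdPi, Equiv.sumPiEquivProdPi]
    have h1 : ∫ x, F ∅ x * F Finset.univ x ∂π = (∫ y, f y ∂πL) * (∫ y, f y ∂πL) := by
      calc ∫ x, F ∅ x * F Finset.univ x ∂π
          = ∫ x, (fun p : (Fin n → 𝒳) × (Fin n → 𝒳) => f p.1 * f p.2) (E x) ∂π := by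
            congr 1; funext x; rw [hFE x, hFE' x]
        _ = ∫ p : (Fin n → 𝒳) × (Fin n → 𝒳), f p.1 * f p.2 ∂(πL.prod πL) :=
            hEint _ ((hf.comp measurable_fst).mul (hf.comp measurable_snd))
        _ = (∫ y, f y ∂πL) * (∫ y, f y ∂πL) := integral_prod_mul f f
    have h2 : ∫ x, F ∅ x ∂π = ∫ y, f y ∂πL := by
      calc ∫ x, F ∅ x ∂π
          = ∫ x, (fun p : (Fin n → 𝒳) × (Fin n → 𝒳) => f p.1 * (fun _ => (1:ℝ)) p.2) (E x) ∂π := by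
            congr 1; funext x; rw [hFE x]; simp
        _ = ∫ p : (Fin n → 𝒳) × (Fin n → 𝒳), f p.1 * (fun _ => (1:ℝ)) p.2 ∂(πL.prod πL) :=
            hEint _ ((hf.comp measurable_fst).mul measurable_const)
        _ = (∫ y, f y ∂πL) * (∫ _, (1:ℝ) ∂πL) := integral_prod_mul f (fun _ => (1:ℝ))
        _ = ∫ y, f y ∂πL := by simp
    rw [h1, h2]; ring
  -- Step D : variance formula
  have hvar : variance (fun ω => f fun i => X i ω) μ
      = ∫ x, (F ∅ x) ^ 2 ∂π - (∫ x, F ∅ x ∂π) ^ 2 := by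
    rw [variance_eq_sub hL2]
    have e1 : ∫ x, (F ∅ x) ^ 2 ∂π = ∫ ω, (f fun i => X i ω) ^ 2 ∂μ := by
      rw [htrans _ ((hFmeas ∅).pow_const 2)]
      exact integral_congr_ae (.of_forall fun ω => by simp [hFdef, hJdef, hYdef])
    have e2 : ∫ x, F ∅ x ∂π = ∫ ω, (f fun i => X i ω) ∂μ := by
      rw [htrans _ (hFmeas ∅)]
      exact integral_congr_ae (.of_forall fun ω => by simp [hFdef, hJdef, hYdef])
    rw [e1, e2]
    rfl
  -- matching the RHS integrands
  have hRHS : ∀ i : Fin n,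
      ∫ ω, (f (fun j => X j ω) - f (fun j => if j = i then X' j ω else X j ω)) *
          (f (fun j => if j < i then X' j ω else X j ω) -
           f (fun j => if j ≤ i then X' j ω else X j ω)) ∂μ
        = ∫ x, (F ∅ x - F {i} x) * (F (Finset.Iio i) x - F (Finset.Iic i) x) ∂π := by
    intro i
    rw [htrans _ (by exact ((hFmeas ∅).sub (hFmeas {i})).mul ((hFmeas (Finset.Iio i)).sub (hFmeas (Finset.Iic i))) :
      Measurable fun x => (F ∅ x - F {i} x) * (F (Finset.Iio i) x - F (Finset.Iic i) x))]
    congr 1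
    funext ω
    have a0 : F ∅ (J ω) = f (fun j => X j ω) := by simp [hFdef, hJdef, hYdef]
    have a1 : F {i} (J ω) = f (fun j => if j = i then X' j ω else X j ω) := by
      simp only [hFdef, hJdef, hYdef]
      congr 1
      funext j
      by_cases h : j = i <;> simp [h]
    have a2 : F (Finset.Iio i) (J ω) = f (fun j => if j < i then X' j ω else X j ω) := by
      simp only [hFdef, hJdef, hYdef]
      congr 1
      funext j
      by_cases h : j < i <;> simp [Finset.mem_Iio, h]
    have a3 : F (Finset.Iic i) (J ω) = f (fun j => if j ≤ i then X' j ω else X j ω) := by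
      simp only [hFdef, hJdef, hYdef]
      congr 1
      funext j
      by_cases h : j ≤ i <;> simp [Finset.mem_Iic, h]
    rw [a0, a1, a2, a3]
  -- assembly
  have hsq : ∫ x, (F ∅ x) ^ 2 ∂π - ∫ x, F ∅ x * F Finset.univ x ∂π
      = ∫ x, F ∅ x * (F ∅ x - F Finset.univ x) ∂π := by
    rw [← integral_sub]
    · congr 1; funext x; ring
    · have := aux_integrable_mul (hF2 ∅) (hF2 ∅)
      simpa [sq] using this
    · exact aux_integrable_mul (hF2 ∅) (hF2 Finset.univ)
  calc variance (fun ω => f fun i => X i ω) μ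
      = ∫ x, (F ∅ x) ^ 2 ∂π - (∫ x, F ∅ x ∂π) ^ 2 := hvar
    _ = ∫ x, (F ∅ x) ^ 2 ∂π - ∫ x, F ∅ x * F Finset.univ x ∂π := by rw [hC]
    _ = ∫ x, F ∅ x * (F ∅ x - F Finset.univ x) ∂π := hsq
    _ = ∑ i : Fin n, ∫ x, F ∅ x * (F (Finset.Iio i) x - F (Finset.Iic i) x) ∂π := hB.symm
    _ = ∑ i : Fin n, (1 / 2) *
          ∫ x, (F ∅ x - F {i} x) * (F (Finset.Iio i) x - F (Finset.Iic i) x) ∂π := by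
        refine Finset.sum_congr rfl fun i _ => ?_
        rw [hA i]; ring
    _ = (1 / 2) * ∑ i : Fin n,
          ∫ x, (F ∅ x - F {i} x) * (F (Finset.Iio i) x - F (Finset.Iic i) x) ∂π := by
        rw [Finset.mul_sum]
    _ = (1 / 2) * ∑ i : Fin n, ∫ ω,
          (f (fun j => X j ω) - f (fun j => if j = i then X' j ω else X j ω)) *
          (f (fun j => if j < i then X' j ω else X j ω) -
           f (fun j => if j ≤ i then X' j ω else X j ω)) ∂μ := by
        congr 1
        exact Finset.sum_congr rfl fun i _ => (hRHS i).symm
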